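/- A natural number n is ℚ-optimal if and only if n = 2^{2^i} − 1 for some integer i with 0 ≤ i ≤ 5. In particular, there are exactly six ℚ-optimal numbers, and 2^{2^5} − 1 is the largest of them. -/

import Mathlib

/-- A natural number `n` is `ℚ`-optimal if for every `m` with `0 ≤ m ≤ n`, the
polynomial `X^n - 1` has exactly one monic divisor of degree `m` in `ℚ[X]`. -/
def QOptimal (n : ℕ) : Prop :=
  1 ≤ n ∧ ∀ m : ℕ, m ≤ n → ∃! d : Polynomial ℚ, d.Monic ∧
    d ∣ (Polynomial.X ^ n - 1) ∧ d.natDegree = m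

open Finset Polynomial


lemma sum_range_two_pow (k : ℕ) : ∑ j ∈ range k, 2 ^ j = 2 ^ k - 1 := by
  induction k with
  | zero => simp
  | succ k ih =>
    rw [Finset.sum_range_succ, ih]
    have : 1 ≤ 2 ^ k := Nat.one_le_two_pow
    omega

lemma sum_two_pow_lt {k : ℕ} {U : Finset ℕ} (h : U ⊆ range k) :
    ∑ j ∈ U, 2 ^ j < 2 ^ k := by
  calc ∑ j ∈ U, 2 ^ j ≤ ∑ j ∈ range k, 2 ^ j := Finset.sum_le_sum_of_subset h
    _ < 2 ^ k := by rw [sum_range_two_pow]; exact Nat.sub_lt (Nat.two_pow_pos k) one_pos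

lemma bin_exu (k : ℕ) : ∀ m < 2 ^ k, ∃! U : Finset ℕ, U ⊆ range k ∧ ∑ j ∈ U, 2 ^ j = m := by
  induction k with
  | zero =>
    intro m hm
    have hm0 : m = 0 := by simpa using hm
    refine ⟨∅, ⟨by simp, by simp [hm0]⟩, ?_⟩
    rintro U ⟨hU, -⟩
    simpa using subset_empty.mp (by simpa using hU)
  | succ k ih =>
    intro m hm
    by_cases hc : m < 2 ^ k
    · obtain ⟨U, ⟨hU1, hU2⟩, hUu⟩ := ih m hc
      refine ⟨U, ⟨hU1.trans (range_subset_range.2 k.le_succ), hU2⟩, ?_⟩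
      rintro V ⟨hV1, hV2⟩
      have hkV : k ∉ V := by
        intro hk
        have : 2 ^ k ≤ ∑ j ∈ V, 2 ^ j := Finset.single_le_sum (fun i _ => Nat.zero_le _) hk
        omega
      refine hUu V ⟨fun x hx => ?_, hV2⟩
      have := hV1 hx
      rw [mem_range] at this ⊢
      rcases Nat.lt_succ_iff_lt_or_eq.mp this with h | rfl
      · exact h
      · exact absurd hx hkV
    · push_neg at hc
      have hm' : m - 2 ^ k < 2 ^ k := by
        have : (2:ℕ) ^ (k+1) = 2 * 2 ^ k := by ring
        omega
      obtain ⟨U, ⟨hU1, hU2⟩, hUu⟩ := ih (m - 2 ^ k) hm'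
      have hkU : k ∉ U := fun h => by simpa using hU1 h
      refine ⟨insert k U, ⟨?_, ?_⟩, ?_⟩
      · exact insert_subset (mem_range.2 k.lt_succ_self) (hU1.trans (range_subset_range.2 k.le_succ))
      · rw [Finset.sum_insert hkU, hU2]; omega
      · rintro V ⟨hV1, hV2⟩
        have hkV : k ∈ V := by
          by_contra hk
          have hVr : V ⊆ range k := by
            intro x hx
            have := hV1 hx
            rw [mem_range] at this ⊢
            rcases Nat.lt_succ_iff_lt_or_eq.mp this with h | rfl
            · exact h
            · exact absurd hx hk
          have := sum_two_pow_lt hVr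
          omega
        have he : V.erase k ⊆ range k := by
          intro x hx
          have hxk : x ≠ k := ne_of_mem_erase hx
          have := hV1 (mem_of_mem_erase hx)
          rw [mem_range] at this ⊢
          omega
        have hsum : ∑ j ∈ V.erase k, 2 ^ j = m - 2 ^ k := by
          have h' : ∑ j ∈ V.erase k, 2 ^ j + 2 ^ k = ∑ j ∈ V, 2 ^ j :=
            Finset.sum_erase_add V _ hkV
          omega
        have := hUu (V.erase k) ⟨he, hsum⟩
        rw [← this, Finset.insert_erase hkV]

lemma count_lemma {A : Finset ℕ}
    (H : ∀ m ≤ ∑ a ∈ A, a, ∃! T : Finset ℕ, T ⊆ A ∧ ∑ a ∈ T, a = m)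
    {B : Finset ℕ} (hB : B ⊆ A) : 2 ^ B.card ≤ (∑ a ∈ B, a) + 1 := by
  have hBA : ∑ a ∈ B, a ≤ ∑ a ∈ A, a := Finset.sum_le_sum_of_subset hB
  have := Finset.card_le_card_of_injOn (fun T => ∑ a ∈ T, a)
    (s := B.powerset) (t := range ((∑ a ∈ B, a) + 1))
    (fun T hT => by
      rw [Finset.mem_coe, mem_range, Nat.lt_succ_iff]
      exact Finset.sum_le_sum_of_subset (mem_powerset.mp (Finset.mem_coe.mp hT)))
    (fun T₁ h₁ T₂ h₂ h => by
      simp only [Finset.mem_coe, mem_powerset] at h₁ h₂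
      have hle : ∑ a ∈ T₁, a ≤ ∑ a ∈ A, a := le_trans (Finset.sum_le_sum_of_subset h₁) hBA
      exact ((H _ hle).unique ⟨h₁.trans hB, rfl⟩ ⟨h₂.trans hB, h.symm⟩))
  simpa [Finset.card_powerset] using this

lemma core_lemma (A : Finset ℕ)
    (H : ∀ m ≤ ∑ a ∈ A, a, ∃! T : Finset ℕ, T ⊆ A ∧ ∑ a ∈ T, a = m) :
    A = (range A.card).image (2 ^ ·) := by
  -- upper bound on partial sums
  have hfilter_succ : ∀ b : ℕ, A.filter (· < b + 1)
      = if b ∈ A then insert b (A.filter (· < b)) else A.filter (· < b) := by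
    intro b
    split_ifs with hb
    · ext x
      simp only [mem_filter, mem_insert]
      constructor
      · rintro ⟨hx, hlt⟩
        rcases Nat.lt_succ_iff_lt_or_eq.mp hlt with h | rfl
        · exact Or.inr ⟨hx, h⟩
        · exact Or.inl rfl
      · rintro (rfl | ⟨hx, h⟩)
        · exact ⟨hb, Nat.lt_succ_self _⟩
        · exact ⟨hx, h.trans (Nat.lt_succ_self _)⟩
    · ext x
      simp only [mem_filter]
      constructor
      · rintro ⟨hx, hlt⟩
        have : x ≠ b := fun h => hb (h ▸ hx)
        exact ⟨hx, by omega⟩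
      · rintro ⟨hx, h⟩
        exact ⟨hx, h.trans (Nat.lt_succ_self _)⟩
  have hup : ∀ b : ℕ, (∑ a ∈ A.filter (· < b), a) ≤ 2 ^ (A.filter (· < b)).card - 1 := by
    intro b
    induction b with
    | zero => simp
    | succ b ih =>
      rw [hfilter_succ b]
      split_ifs with hb
      · have hbn : b ∉ A.filter (· < b) := by simp
        rw [Finset.sum_insert hbn, Finset.card_insert_of_notMem hbn]
        -- b ≤ sum of filter + 1 : completeness
        have hble : b ≤ (∑ a ∈ A.filter (· < b), a) + 1 := by
          set s := ∑ a ∈ A.filter (· < b), a with hs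
          by_contra hcon
          push_neg at hcon
          -- use existence at m = s + 1
          have hmle : s + 1 ≤ ∑ a ∈ A, a := by
            have : A.filter (· < b) ⊆ A.erase b := by
              intro x hx
              rw [mem_filter] at hx
              exact mem_erase.mpr ⟨Nat.ne_of_lt hx.2, hx.1⟩
            have h1 : s + b ≤ ∑ a ∈ A, a := by
              have he : b + ∑ a ∈ A.erase b, a = ∑ a ∈ A, a :=
                Finset.add_sum_erase A id hb
              have h2 : s ≤ ∑ a ∈ A.erase b, a := Finset.sum_le_sum_of_subset this
              omega
            omega
          obtain ⟨T, ⟨hT1, hT2⟩, -⟩ := H (s + 1) hmle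
          have hTsub : T ⊆ A.filter (· < b) := by
            intro x hx
            rw [mem_filter]
            refine ⟨hT1 hx, ?_⟩
            have : x ≤ ∑ a ∈ T, a := Finset.single_le_sum (f := id) (fun i _ => Nat.zero_le _) hx
            omega
          have := Finset.sum_le_sum_of_subset (f := id) hTsub
          simp only [id] at this
          omega
        have h1 : (1:ℕ) ≤ 2 ^ (A.filter (· < b)).card := Nat.one_le_two_pow
        calc b + ∑ a ∈ A.filter (· < b), a ≤ 2 * (∑ a ∈ A.filter (· < b), a) + 1 := by omega
          _ ≤ 2 ^ ((A.filter (· < b)).card + 1) - 1 := by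
              have := ih
              have h2 : (2:ℕ) ^ ((A.filter (· < b)).card + 1) = 2 * 2 ^ (A.filter (· < b)).card := by ring
              omega
      · exact ih
  -- each b in A equals 2 ^ (card of filter)
  have hkey : ∀ b ∈ A, b = 2 ^ (A.filter (· < b)).card := by
    intro b hb
    have hlow : 2 ^ (A.filter (· < b)).card ≤ (∑ a ∈ A.filter (· < b), a) + 1 :=
      count_lemma H (Finset.filter_subset _ _)
    have hlow' : 2 ^ (A.filter (· < b + 1)).card ≤ (∑ a ∈ A.filter (· < b + 1), a) + 1 :=
      count_lemma H (Finset.filter_subset _ _)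
    have hup1 := hup b
    have hup2 := hup (b + 1)
    rw [hfilter_succ b, if_pos hb] at hlow' hup2
    have hbn : b ∉ A.filter (· < b) := by simp
    rw [Finset.sum_insert hbn, Finset.card_insert_of_notMem hbn] at hlow' hup2
    have h2 : (2:ℕ) ^ ((A.filter (· < b)).card + 1) = 2 * 2 ^ (A.filter (· < b)).card := by ring
    have h1 : (1:ℕ) ≤ 2 ^ (A.filter (· < b)).card := Nat.one_le_two_pow
    omega
  -- the map b ↦ card (filter < b) is injective on A with image range (card A)
  classical
  have hmono : ∀ b₁ ∈ A, ∀ b₂ ∈ A, b₁ < b₂ →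
      (A.filter (· < b₁)).card < (A.filter (· < b₂)).card := by
    intro b₁ h₁ b₂ h₂ hlt
    apply Finset.card_lt_card
    rw [Finset.ssubset_iff_of_subset]
    · exact ⟨b₁, mem_filter.mpr ⟨h₁, hlt⟩, by simp⟩
    · intro x hx
      rw [mem_filter] at hx ⊢
      exact ⟨hx.1, hx.2.trans hlt⟩
  have hinj : Set.InjOn (fun b => (A.filter (· < b)).card) A := by
    intro b₁ h₁ b₂ h₂ h
    rcases lt_trichotomy b₁ b₂ with hlt | heq | hlt
    · exact absurd h (Nat.ne_of_lt (hmono _ h₁ _ h₂ hlt))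
    · exact heq
    · exact absurd h.symm (Nat.ne_of_lt (hmono _ h₂ _ h₁ hlt))
  have himage : A.image (fun b => (A.filter (· < b)).card) = range A.card := by
    apply Finset.eq_of_subset_of_card_le
    · intro x hx
      rw [Finset.mem_image] at hx
      obtain ⟨b, hb, rfl⟩ := hx
      rw [mem_range]
      apply Finset.card_lt_card
      rw [Finset.ssubset_iff_of_subset (Finset.filter_subset _ _)]
      exact ⟨b, hb, by simp⟩
    · rw [Finset.card_range, Finset.card_image_of_injOn hinj]
  calc A = A.image (fun b => 2 ^ (A.filter (· < b)).card) := by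
        rw [Finset.image_congr (g := id) (fun b hb => (hkey b hb).symm)]
        · exact (Finset.image_id).symm
      _ = (A.image (fun b => (A.filter (· < b)).card)).image (2 ^ ·) := by
        rw [Finset.image_image]; rfl
      _ = (range A.card).image (2 ^ ·) := by rw [himage]


section transfer
variable {α β : Type*} [DecidableEq α] [DecidableEq β]

lemma image_injOn_subsets {g : α → β} {X : Finset α} (hinj : Set.InjOn g X)
    {T₁ T₂ : Finset α} (h₁ : T₁ ⊆ X) (h₂ : T₂ ⊆ X)
    (h : T₁.image g = T₂.image g) : T₁ = T₂ := by
  ext a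
  constructor
  · intro ha
    have : g a ∈ T₂.image g := h ▸ Finset.mem_image_of_mem g ha
    obtain ⟨b, hb, hba⟩ := Finset.mem_image.mp this
    exact (hinj (h₂ hb) (h₁ ha) hba) ▸ hb
  · intro ha
    have : g a ∈ T₁.image g := h ▸ Finset.mem_image_of_mem g ha
    obtain ⟨b, hb, hba⟩ := Finset.mem_image.mp this
    exact (hinj (h₁ hb) (h₂ ha) hba) ▸ hb

lemma exu_transfer (X : Finset α) (Y : Finset β) (w : α → ℕ) (v : β → ℕ) (g : α → β)
    (hmap : ∀ x ∈ X, g x ∈ Y) (hsurj : ∀ y ∈ Y, ∃ x ∈ X, g x = y)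
    (hinj : Set.InjOn g X) (hw : ∀ x ∈ X, w x = v (g x)) (m : ℕ) :
    (∃! T : Finset α, T ⊆ X ∧ ∑ x ∈ T, w x = m) ↔
      (∃! T' : Finset β, T' ⊆ Y ∧ ∑ y ∈ T', v y = m) := by
  have himg_sum : ∀ T : Finset α, T ⊆ X → ∑ y ∈ T.image g, v y = ∑ x ∈ T, w x := by
    intro T hT
    rw [Finset.sum_image (fun x hx y hy h => hinj (hT hx) (hT hy) h)]
    exact (Finset.sum_congr rfl fun x hx => (hw x (hT hx)).symm)
  have hfilter : ∀ T' : Finset β, T' ⊆ Y →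
      (X.filter (fun x => g x ∈ T')).image g = T' := by
    intro T' hT'
    ext y
    simp only [Finset.mem_image, Finset.mem_filter]
    constructor
    · rintro ⟨x, ⟨-, hx⟩, rfl⟩; exact hx
    · intro hy
      obtain ⟨x, hx, rfl⟩ := hsurj y (hT' hy)
      exact ⟨x, ⟨hx, hy⟩, rfl⟩
  constructor
  · rintro ⟨T, ⟨hT, hs⟩, huniq⟩
    refine ⟨T.image g, ⟨Finset.image_subset_iff.mpr (fun x hx => hmap x (hT hx)),
      (himg_sum T hT).trans hs⟩, ?_⟩
    rintro T' ⟨hT', hs'⟩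
    set T₀ := X.filter (fun x => g x ∈ T') with hT₀def
    have hT₀ : T₀ ⊆ X := Finset.filter_subset _ _
    have himg : T₀.image g = T' := hfilter T' hT'
    have : ∑ x ∈ T₀, w x = m := by rw [← himg_sum T₀ hT₀, himg, hs']
    have := huniq T₀ ⟨hT₀, this⟩
    rw [← himg, this]
  · rintro ⟨T', ⟨hT', hs'⟩, huniq⟩
    set T₀ := X.filter (fun x => g x ∈ T') with hT₀def
    have hT₀ : T₀ ⊆ X := Finset.filter_subset _ _
    have himg : T₀.image g = T' := hfilter T' hT'
    refine ⟨T₀, ⟨hT₀, by rw [← himg_sum T₀ hT₀, himg, hs']⟩, ?_⟩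
    rintro T ⟨hT, hs⟩
    have h1 : T.image g = T' := huniq (T.image g)
      ⟨Finset.image_subset_iff.mpr (fun x hx => hmap x (hT hx)), (himg_sum T hT).trans hs⟩
    exact image_injOn_subsets hinj hT hT₀ (h1.trans himg.symm)

end transfer

lemma subset_of_prod_dvd_prod {S : Finset ℕ} {f : ℕ → ℚ[X]}
    (hirr : ∀ i ∈ S, Irreducible (f i))
    (hmon : ∀ i ∈ S, (f i).Monic) (hinj : Set.InjOn f S)
    {T₁ T₂ : Finset ℕ} (h₁ : T₁ ⊆ S) (h₂ : T₂ ⊆ S)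
    (h : ∏ i ∈ T₁, f i ∣ ∏ i ∈ T₂, f i) : T₁ ⊆ T₂ := by
  intro a ha
  have hpa : Prime (f a) := (hirr a (h₁ ha)).prime
  have : f a ∣ ∏ i ∈ T₂, f i := dvd_trans (Finset.dvd_prod_of_mem f ha) h
  obtain ⟨b, hb, hdvd⟩ := hpa.exists_mem_finset_dvd this
  have hassoc : Associated (f a) (f b) :=
    (hpa.irreducible.associated_of_dvd (hirr b (h₂ hb)) hdvd)
  have : f a = f b := Polynomial.eq_of_monic_of_associated (hmon a (h₁ ha)) (hmon b (h₂ hb)) hassoc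
  have : a = b := hinj (h₁ ha) (h₂ hb) this
  exact this ▸ hb

lemma monic_dvd_prod {S : Finset ℕ} {f : ℕ → ℚ[X]} (hirr : ∀ i ∈ S, Irreducible (f i))
    (hmon : ∀ i ∈ S, (f i).Monic) :
    ∀ d : ℚ[X], d.Monic → d ∣ ∏ i ∈ S, f i → ∃ T ⊆ S, d = ∏ i ∈ T, f i := by
  classical
  induction S using Finset.induction_on with
  | empty =>
    intro d hd hdvd
    simp only [Finset.prod_empty] at hdvd
    exact ⟨∅, Finset.Subset.refl _, by simpa using hd.eq_one_of_isUnit (isUnit_of_dvd_one hdvd)⟩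
  | insert a s ha ih =>
    intro d hd hdvd
    rw [Finset.prod_insert ha] at hdvd
    have hirr' : ∀ i ∈ s, Irreducible (f i) := fun i hi => hirr i (Finset.mem_insert_of_mem hi)
    have hmon' : ∀ i ∈ s, (f i).Monic := fun i hi => hmon i (Finset.mem_insert_of_mem hi)
    have hfa : Irreducible (f a) := hirr a (Finset.mem_insert_self a s)
    by_cases hfd : f a ∣ d
    · obtain ⟨e, rfl⟩ := hfd
      have hmone : e.Monic := (hmon a (Finset.mem_insert_self a s)).of_mul_monic_left hd
      have hfa0 : f a ≠ 0 := hfa.ne_zero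
      have he : e ∣ ∏ i ∈ s, f i := by
        rwa [mul_dvd_mul_iff_left hfa0] at hdvd
      obtain ⟨T, hT, rfl⟩ := ih hirr' hmon' e hmone he
      refine ⟨insert a T, Finset.insert_subset_insert a hT, ?_⟩
      rw [Finset.prod_insert (fun h => ha (hT h))]
    · have hcop : IsCoprime (f a) d := (hfa.coprime_iff_not_dvd).mpr hfd
      have hdd : d ∣ ∏ i ∈ s, f i := hcop.symm.dvd_of_dvd_mul_left hdvd
      obtain ⟨T, hT, rfl⟩ := ih hirr' hmon' d hd hdd
      exact ⟨T, hT.trans (Finset.subset_insert a s), rfl⟩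

/-- Bridge: QOptimal condition is equivalent to subset-sum condition on totients of divisors. -/
lemma poly_bridge {n : ℕ} (hn : 1 ≤ n) (m : ℕ) :
    (∃! d : ℚ[X], d.Monic ∧ d ∣ (X ^ n - 1) ∧ d.natDegree = m) ↔
      (∃! T : Finset ℕ, T ⊆ n.divisors ∧ ∑ d ∈ T, Nat.totient d = m) := by
  set f : ℕ → ℚ[X] := fun i => cyclotomic i ℚ with hf
  have hirr : ∀ i ∈ n.divisors, Irreducible (f i) :=
    fun i hi => cyclotomic.irreducible_rat (Nat.pos_of_mem_divisors hi)
  have hmon : ∀ i ∈ n.divisors, (f i).Monic := fun i _ => cyclotomic.monic i ℚ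
  have hinj : Set.InjOn f n.divisors := fun a _ b _ h => cyclotomic_injective h
  have hprod : ∏ i ∈ n.divisors, f i = X ^ n - 1 :=
    prod_cyclotomic_eq_X_pow_sub_one hn ℚ
  have hdeg : ∀ T : Finset ℕ, T ⊆ n.divisors →
      (∏ i ∈ T, f i).natDegree = ∑ d ∈ T, Nat.totient d := by
    intro T hT
    rw [Polynomial.natDegree_prod_of_monic _ _ (fun i hi => hmon i (hT hi))]
    exact Finset.sum_congr rfl (fun i _ => natDegree_cyclotomic i ℚ)
  have hchar : ∀ d : ℚ[X], (d.Monic ∧ d ∣ (X ^ n - 1)) ↔ ∃ T ⊆ n.divisors, d = ∏ i ∈ T, f i := by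
    intro d
    constructor
    · rintro ⟨hd, hdvd⟩
      exact monic_dvd_prod hirr hmon d hd (hprod ▸ hdvd)
    · rintro ⟨T, hT, rfl⟩
      exact ⟨monic_prod_of_monic _ _ (fun i hi => hmon i (hT hi)),
        hprod ▸ Finset.prod_dvd_prod_of_subset _ _ _ hT⟩
  have hPinj : ∀ T₁ ⊆ n.divisors, ∀ T₂ ⊆ n.divisors, (∏ i ∈ T₁, f i) = (∏ i ∈ T₂, f i) → T₁ = T₂ := by
    intro T₁ h₁ T₂ h₂ h
    exact Finset.Subset.antisymm
      (subset_of_prod_dvd_prod hirr hmon hinj h₁ h₂ (h ▸ dvd_refl _))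
      (subset_of_prod_dvd_prod hirr hmon hinj h₂ h₁ (h ▸ dvd_refl _))
  constructor
  · rintro ⟨d, ⟨hd1, hd2, hd3⟩, huniq⟩
    obtain ⟨T, hT, rfl⟩ := (hchar d).mp ⟨hd1, hd2⟩
    refine ⟨T, ⟨hT, by rw [← hdeg T hT]; exact hd3⟩, ?_⟩
    rintro T' ⟨hT', hs'⟩
    have hd' := (hchar (∏ i ∈ T', f i)).mpr ⟨T', hT', rfl⟩
    have : (∏ i ∈ T', f i) = ∏ i ∈ T, f i :=
      huniq _ ⟨hd'.1, hd'.2, by rw [hdeg T' hT']; exact hs'⟩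
    exact hPinj T' hT' T hT this
  · rintro ⟨T, ⟨hT, hs⟩, huniq⟩
    have hd := (hchar (∏ i ∈ T, f i)).mpr ⟨T, hT, rfl⟩
    refine ⟨∏ i ∈ T, f i, ⟨hd.1, hd.2, by rw [hdeg T hT]; exact hs⟩, ?_⟩
    rintro d ⟨hd1, hd2, hd3⟩
    obtain ⟨T', hT', rfl⟩ := (hchar d).mp ⟨hd1, hd2⟩
    have : T' = T := huniq T' ⟨hT', by rw [← hdeg T' hT']; exact hd3⟩
    rw [this]


lemma nat_subset_of_prod_dvd {C : Finset ℕ} {f : ℕ → ℕ}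
    (hp : ∀ c ∈ C, (f c).Prime) (hinj : Set.InjOn f C)
    {U₁ U₂ : Finset ℕ} (h₁ : U₁ ⊆ C) (h₂ : U₂ ⊆ C)
    (h : ∏ c ∈ U₁, f c ∣ ∏ c ∈ U₂, f c) : U₁ ⊆ U₂ := by
  intro a ha
  have hpa : Prime (f a) := (hp a (h₁ ha)).prime
  have : f a ∣ ∏ c ∈ U₂, f c := dvd_trans (Finset.dvd_prod_of_mem f ha) h
  obtain ⟨b, hb, hdvd⟩ := hpa.exists_mem_finset_dvd this
  have : f a = f b := ((Nat.prime_dvd_prime_iff_eq (hp a (h₁ ha)) (hp b (h₂ hb))).mp hdvd)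
  exact (hinj (h₁ ha) (h₂ hb) this) ▸ hb

lemma nat_dvd_prod_primes {C : Finset ℕ} {f : ℕ → ℕ} (hp : ∀ c ∈ C, (f c).Prime) :
    ∀ d : ℕ, d ∣ ∏ c ∈ C, f c → ∃ U ⊆ C, d = ∏ c ∈ U, f c := by
  classical
  induction C using Finset.induction_on with
  | empty =>
    intro d hdvd
    simp only [Finset.prod_empty] at hdvd
    exact ⟨∅, Finset.Subset.refl _, by simpa using Nat.eq_one_of_dvd_one hdvd⟩
  | insert a s ha ih =>
    intro d hdvd
    rw [Finset.prod_insert ha] at hdvd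
    have hp' : ∀ c ∈ s, (f c).Prime := fun c hc => hp c (Finset.mem_insert_of_mem hc)
    have hfa : (f a).Prime := hp a (Finset.mem_insert_self a s)
    by_cases hfd : f a ∣ d
    · obtain ⟨e, rfl⟩ := hfd
      have hfa0 : f a ≠ 0 := hfa.ne_zero
      have he : e ∣ ∏ c ∈ s, f c := by
        rwa [mul_dvd_mul_iff_left hfa0] at hdvd
      obtain ⟨U, hU, rfl⟩ := ih hp' e he
      refine ⟨insert a U, Finset.insert_subset_insert a hU, ?_⟩
      rw [Finset.prod_insert (fun h => ha (hU h))]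
    · have hcop : Nat.Coprime (f a) d := (Nat.Prime.coprime_iff_not_dvd hfa).mpr hfd
      have hdd : d ∣ ∏ c ∈ s, f c := (Nat.Coprime.dvd_of_dvd_mul_left hcop.symm hdvd)
      obtain ⟨U, hU, rfl⟩ := ih hp' d hdd
      exact ⟨U, hU.trans (Finset.subset_insert a s), rfl⟩

lemma totient_prod_primes {C : Finset ℕ} {f : ℕ → ℕ} (hp : ∀ c ∈ C, (f c).Prime)
    (hinj : Set.InjOn f C) :
    Nat.totient (∏ c ∈ C, f c) = ∏ c ∈ C, (f c - 1) := by
  classical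
  induction C using Finset.induction_on with
  | empty => simp
  | insert a s ha ih =>
    have hp' : ∀ c ∈ s, (f c).Prime := fun c hc => hp c (Finset.mem_insert_of_mem hc)
    have hinj' : Set.InjOn f s := hinj.mono (by simp [Finset.subset_insert, Finset.coe_subset])
    have hfa : (f a).Prime := hp a (Finset.mem_insert_self a s)
    have hcop : Nat.Coprime (f a) (∏ c ∈ s, f c) := by
      apply Nat.Coprime.prod_right
      intro c hc
      refine (Nat.coprime_primes hfa (hp' c hc)).mpr ?_
      intro h
      exact ha ((hinj (Finset.mem_insert_self a s) (Finset.mem_insert_of_mem hc) h) ▸ hc)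
    rw [Finset.prod_insert ha, Nat.totient_mul hcop, Nat.totient_prime hfa,
      Finset.prod_insert ha, ih hp' hinj']

-- NEW material
lemma two_pow_injective : Function.Injective (2 ^ · : ℕ → ℕ) :=
  Nat.pow_right_injective le_rfl

/-- ∃!-condition on A = image of powers of two. -/
lemma core' (k : ℕ) {m : ℕ} (hm : m ≤ 2 ^ k - 1) :
    ∃! T : Finset ℕ, T ⊆ (range k).image (2 ^ ·) ∧ ∑ a ∈ T, a = m := by
  have hm' : m < 2 ^ k := by have : (1:ℕ) ≤ 2 ^ k := Nat.one_le_two_pow; omega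
  have := (exu_transfer (range k) ((range k).image (2 ^ ·)) (2 ^ ·) id (2 ^ ·)
    (fun x hx => Finset.mem_image_of_mem _ hx)
    (fun y hy => by obtain ⟨x, hx, rfl⟩ := Finset.mem_image.mp hy; exact ⟨x, hx, rfl⟩)
    (fun a _ b _ h => two_pow_injective h) (fun x _ => rfl) m).mp (bin_exu k m hm')
  simpa using this

section fermatprod

variable {C : Finset ℕ}

local notation "F" => Nat.fermatNumber

lemma fermat_injOn : Set.InjOn F (C : Set ℕ) := fun a _ b _ h =>
  Nat.fermatNumber_injective h

lemma fermat_prod_pos (hp : ∀ c ∈ C, (F c).Prime) : 0 < ∏ c ∈ C, F c :=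
  Finset.prod_pos (fun c hc => (hp c hc).pos)

lemma divisors_fermat_prod (hp : ∀ c ∈ C, (F c).Prime) :
    (∏ c ∈ C, F c).divisors = C.powerset.image (fun U => ∏ c ∈ U, F c) := by
  ext d
  rw [Nat.mem_divisors, Finset.mem_image]
  constructor
  · rintro ⟨hdvd, -⟩
    obtain ⟨U, hU, rfl⟩ := nat_dvd_prod_primes hp d hdvd
    exact ⟨U, Finset.mem_powerset.mpr hU, rfl⟩
  · rintro ⟨U, hU, rfl⟩
    exact ⟨Finset.prod_dvd_prod_of_subset _ _ _ (Finset.mem_powerset.mp hU),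
      (fermat_prod_pos hp).ne'⟩

lemma totient_fermat_prod (hp : ∀ c ∈ C, (F c).Prime) {U : Finset ℕ} (hU : U ⊆ C) :
    Nat.totient (∏ c ∈ U, F c) = 2 ^ (∑ c ∈ U, 2 ^ c) := by
  rw [totient_prod_primes (fun c hc => hp c (hU hc)) (fermat_injOn.mono hU)]
  rw [← Finset.prod_pow_eq_pow_sum]
  apply Finset.prod_congr rfl
  intro c _
  show F c - 1 = (2 ^ ·) (2 ^ c)
  simp [Nat.fermatNumber]

lemma fermat_prod_injOn (hp : ∀ c ∈ C, (F c).Prime) :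
    Set.InjOn (fun U => ∏ c ∈ U, F c) (C.powerset : Set (Finset ℕ)) := by
  intro U₁ h₁ U₂ h₂ h
  simp only [Finset.mem_coe, Finset.mem_powerset] at h₁ h₂
  exact Finset.Subset.antisymm
    (nat_subset_of_prod_dvd hp fermat_injOn h₁ h₂ (dvd_of_eq h))
    (nat_subset_of_prod_dvd hp fermat_injOn h₂ h₁ (dvd_of_eq h.symm))

/-- backward: the ∃!-totient condition holds for products of Fermat primes over range t -/
lemma exu_totient_of_fermat (t : ℕ) (hp : ∀ c < t, (F c).Prime) {m : ℕ}
    (hm : m ≤ 2 ^ 2 ^ t - 1) :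
    ∃! T : Finset ℕ, T ⊆ (2 ^ 2 ^ t - 1).divisors ∧ ∑ d ∈ T, Nat.totient d = m := by
  have hp' : ∀ c ∈ range t, (F c).Prime := fun c hc => hp c (mem_range.mp hc)
  have hn : (2 : ℕ) ^ 2 ^ t - 1 = ∏ c ∈ range t, F c := by
    rw [Nat.prod_fermatNumber]
    simp [Nat.fermatNumber]
  rw [hn]
  set n := ∏ c ∈ range t, F c with hndef
  set A₀ := (range (2 ^ t)).image (2 ^ · : ℕ → ℕ) with hA₀
  -- transfer from A₀ via g = totient
  rw [exu_transfer n.divisors A₀ Nat.totient id Nat.totient ?hmap ?hsurj ?hinj (fun x _ => rfl) m]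
  · exact core' (2 ^ t) hm
  case hmap =>
    intro d hd
    rw [divisors_fermat_prod hp', Finset.mem_image] at hd
    obtain ⟨U, hU, rfl⟩ := hd
    rw [Finset.mem_powerset] at hU
    rw [totient_fermat_prod hp' hU, hA₀]
    exact Finset.mem_image_of_mem _ (mem_range.mpr (sum_two_pow_lt hU))
  case hsurj =>
    intro y hy
    rw [hA₀, Finset.mem_image] at hy
    obtain ⟨j, hj, rfl⟩ := hy
    rw [mem_range] at hj
    obtain ⟨U, ⟨hU, hUs⟩, -⟩ := bin_exu t j hj
    refine ⟨∏ c ∈ U, F c, ?_, ?_⟩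
    · rw [divisors_fermat_prod hp']
      exact Finset.mem_image_of_mem _ (Finset.mem_powerset.mpr hU)
    · rw [totient_fermat_prod hp' hU, hUs]
  case hinj =>
    intro d₁ h₁ d₂ h₂ h
    rw [Finset.mem_coe, divisors_fermat_prod hp', Finset.mem_image] at h₁ h₂
    obtain ⟨U₁, hU₁, rfl⟩ := h₁
    obtain ⟨U₂, hU₂, rfl⟩ := h₂
    rw [Finset.mem_powerset] at hU₁ hU₂
    rw [totient_fermat_prod hp' hU₁, totient_fermat_prod hp' hU₂] at h
    have hsum : ∑ c ∈ U₁, 2 ^ c = ∑ c ∈ U₂, 2 ^ c := two_pow_injective h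
    have hlt : ∑ c ∈ U₁, 2 ^ c < 2 ^ t := sum_two_pow_lt hU₁
    have := (bin_exu t _ hlt).unique ⟨hU₁, rfl⟩ ⟨hU₂, hsum.symm⟩
    rw [this]

end fermatprod

lemma fermat_of_qoptimal {n : ℕ} (hn : 1 ≤ n)
    (H : ∀ m ≤ n, ∃! T : Finset ℕ, T ⊆ n.divisors ∧ ∑ d ∈ T, Nat.totient d = m) :
    ∃ t : ℕ, t ≤ 5 ∧ n = 2 ^ 2 ^ t - 1 := by
  have hn0 : n ≠ 0 := by omega
  -- totient is injective on divisors
  have φinj : Set.InjOn Nat.totient (n.divisors : Set ℕ) := by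
    intro a ha b hb h
    rw [Finset.mem_coe] at ha hb
    have hle : Nat.totient a ≤ n :=
      le_trans (Nat.totient_le a) (Nat.le_of_dvd hn (Nat.dvd_of_mem_divisors ha))
    have := (H _ hle).unique (y₁ := {a}) (y₂ := {b})
      ⟨Finset.singleton_subset_iff.mpr ha, Finset.sum_singleton _ _⟩
      ⟨Finset.singleton_subset_iff.mpr hb, by rw [Finset.sum_singleton, h]⟩
    exact Finset.singleton_injective this
  set A₀ := n.divisors.image Nat.totient with hA₀def
  have sumA₀ : ∑ a ∈ A₀, a = n := by
    rw [hA₀def, Finset.sum_image (fun x hx y hy h => φinj hx hy h)]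
    exact Nat.sum_totient n
  have HA₀ : ∀ m ≤ ∑ a ∈ A₀, a, ∃! T : Finset ℕ, T ⊆ A₀ ∧ ∑ a ∈ T, a = m := by
    intro m hm
    rw [sumA₀] at hm
    have := (exu_transfer n.divisors A₀ Nat.totient id Nat.totient
      (fun x hx => Finset.mem_image_of_mem _ hx)
      (fun y hy => by
        obtain ⟨x, hx, rfl⟩ := Finset.mem_image.mp hy; exact ⟨x, hx, rfl⟩)
      φinj (fun x _ => rfl) m).mp (H m hm)
    simpa using this
  set k := A₀.card with hkdef
  have hA : A₀ = (range k).image (2 ^ ·) := core_lemma A₀ HA₀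
  have hnk : n = 2 ^ k - 1 := by
    rw [← sumA₀, hA, Finset.sum_image (fun x _ y _ h => two_pow_injective h),
      sum_range_two_pow]
  -- n is odd
  have hodd : ¬ 2 ∣ n := by
    intro h2
    have h1d : 1 ∈ n.divisors := Nat.one_mem_divisors.mpr hn0
    have h2d : 2 ∈ n.divisors := Nat.mem_divisors.mpr ⟨h2, hn0⟩
    have : (1 : ℕ) = 2 := φinj h1d h2d (by simp [Nat.totient_one, Nat.totient_two])
    omega
  -- totients of divisors are powers of two
  have hppow : ∀ d ∈ n.divisors, ∃ j, j < k ∧ Nat.totient d = 2 ^ j := by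
    intro d hd
    have : Nat.totient d ∈ A₀ := Finset.mem_image_of_mem _ hd
    rw [hA, Finset.mem_image] at this
    obtain ⟨j, hj, hje⟩ := this
    exact ⟨j, mem_range.mp hj, hje.symm⟩
  -- every prime factor is a Fermat number
  have hprime : ∀ p : ℕ, p.Prime → p ∣ n → ∃ c, p = Nat.fermatNumber c := by
    intro p hp hpn
    have hpd : p ∈ n.divisors := Nat.mem_divisors.mpr ⟨hpn, hn0⟩
    obtain ⟨j, -, hj⟩ := hppow p hpd
    rw [Nat.totient_prime hp] at hj
    have hp2 : p ≠ 2 := fun h => hodd (h ▸ hpn)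
    have hp3 : 3 ≤ p := by
      have := hp.two_le
      omega
    have hj0 : j ≠ 0 := by
      intro h
      rw [h] at hj
      omega
    have hpeq : p = 2 ^ j + 1 := by omega
    have hPrime : (2 ^ j + 1).Prime := hpeq ▸ hp
    obtain ⟨c, rfl⟩ := Nat.pow_of_pow_add_prime one_lt_two hj0 hPrime
    exact ⟨c, by rw [hpeq]; rfl⟩
  -- n is squarefree
  have hsq : Squarefree n := by
    rw [Nat.squarefree_iff_prime_squarefree]
    intro p hp hdvd
    have hp2 : p ≠ 2 := by
      intro h
      exact hodd (h ▸ dvd_trans (Dvd.intro p rfl) hdvd)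
    have hpd : p * p ∈ n.divisors := Nat.mem_divisors.mpr ⟨hdvd, hn0⟩
    obtain ⟨j, -, hj⟩ := hppow _ hpd
    rw [← sq, Nat.totient_prime_pow hp (by norm_num)] at hj
    have hpdvd2 : p ∣ 2 ^ j := by
      rw [← hj]
      simp [pow_one]
    have := (Nat.prime_dvd_prime_iff_eq hp Nat.prime_two).mp (hp.dvd_of_dvd_pow hpdvd2)
    exact hp2 this
  -- the index set of Fermat primes
  set C := (range n).filter (fun c => Nat.fermatNumber c ∣ n) with hCdef
  have hpC : ∀ c ∈ C, (Nat.fermatNumber c).Prime := by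
    intro c hc
    rw [hCdef, Finset.mem_filter] at hc
    obtain ⟨-, hcd⟩ := hc
    have hne1 : Nat.fermatNumber c ≠ 1 := Nat.fermatNumber_ne_one c
    have hq : (Nat.fermatNumber c).minFac.Prime := Nat.minFac_prime hne1
    have hqd : (Nat.fermatNumber c).minFac ∣ Nat.fermatNumber c := Nat.minFac_dvd _
    obtain ⟨c', hc'⟩ := hprime _ hq (hqd.trans hcd)
    by_cases hcc : c' = c
    · rw [hcc] at hc'
      rwa [← hc']
    · exfalso
      have hcop := Nat.coprime_fermatNumber_fermatNumber hcc
      have : (Nat.fermatNumber c).minFac ∣ Nat.gcd (Nat.fermatNumber c') (Nat.fermatNumber c) :=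
        Nat.dvd_gcd (hc' ▸ dvd_refl _) hqd
      rw [Nat.Coprime] at hcop
      rw [hcop] at this
      exact hq.ne_one (Nat.eq_one_of_dvd_one this)
  -- prime factors of n are the Fermat numbers indexed by C
  have himg : n.primeFactors = C.image Nat.fermatNumber := by
    ext p
    rw [Nat.mem_primeFactors, Finset.mem_image]
    constructor
    · rintro ⟨hp, hpn, -⟩
      obtain ⟨c, rfl⟩ := hprime p hp hpn
      refine ⟨c, ?_, rfl⟩
      rw [hCdef, Finset.mem_filter, mem_range]
      refine ⟨?_, hpn⟩
      have h1 : c < 2 ^ c := Nat.lt_two_pow_self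
      have h2 : 2 ^ c ≤ 2 ^ 2 ^ c := Nat.pow_le_pow_right (by norm_num) (le_of_lt h1)
      have h3 : Nat.fermatNumber c ≤ n := Nat.le_of_dvd hn hpn
      have : c < Nat.fermatNumber c := by
        rw [Nat.fermatNumber]
        omega
      omega
    · rintro ⟨c, hc, rfl⟩
      rw [hCdef, Finset.mem_filter] at hc
      exact ⟨hpC c (by rw [hCdef, Finset.mem_filter]; exact hc), hc.2, hn0⟩
  have hCn : n = ∏ c ∈ C, Nat.fermatNumber c := by
    conv_lhs => rw [← Nat.prod_primeFactors_of_squarefree hsq]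
    rw [himg, Finset.prod_image (fun x _ y _ h => Nat.fermatNumber_injective h)]
  -- divisors structure
  have hD : n.divisors = C.powerset.image (fun U => ∏ c ∈ U, Nat.fermatNumber c) := by
    conv_lhs => rw [hCn]
    exact divisors_fermat_prod hpC
  -- subset sums of 2^c over C are exactly range k
  have hsums : C.powerset.image (fun U => ∑ c ∈ U, 2 ^ c) = range k := by
    apply Finset.image_injective two_pow_injective
    rw [← hA, Finset.image_image, hA₀def, hD, Finset.image_image]
    apply Finset.image_congr
    intro U hU
    rw [Finset.mem_coe, Finset.mem_powerset] at hU
    show 2 ^ (∑ c ∈ U, 2 ^ c) = Nat.totient (∏ c ∈ U, Nat.fermatNumber c)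
    exact (totient_fermat_prod hpC hU).symm
  -- E = image of 2^· over C satisfies the subset-sum hypothesis
  set E := C.image (2 ^ · : ℕ → ℕ) with hEdef
  have sumE : ∑ e ∈ E, e = ∑ c ∈ C, 2 ^ c := by
    rw [hEdef, Finset.sum_image (fun x _ y _ h => two_pow_injective h)]
  have hsCk : ∑ c ∈ C, 2 ^ c < k := by
    have : ∑ c ∈ C, 2 ^ c ∈ range k := by
      rw [← hsums]
      exact Finset.mem_image_of_mem _ (Finset.mem_powerset.mpr (Finset.Subset.refl C))
    exact mem_range.mp this
  have HE : ∀ m ≤ ∑ e ∈ E, e, ∃! V : Finset ℕ, V ⊆ E ∧ ∑ e ∈ V, e = m := by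
    intro m hm
    rw [sumE] at hm
    have hmk : m ∈ range k := mem_range.mpr (lt_of_le_of_lt hm hsCk)
    rw [← hsums, Finset.mem_image] at hmk
    obtain ⟨U, hU, hUs⟩ := hmk
    rw [Finset.mem_powerset] at hU
    refine ⟨U.image (2 ^ ·), ⟨Finset.image_subset_image hU,
      by rw [Finset.sum_image (fun x _ y _ h => two_pow_injective h)]; exact hUs⟩, ?_⟩
    rintro V ⟨hV, hVs⟩
    -- pull back V to a subset of C
    obtain ⟨U', hU', hU'V⟩ := Finset.subset_image_iff.mp hV
    have hsU' : ∑ c ∈ U', 2 ^ c = m := by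
      rw [← hVs, ← hU'V, Finset.sum_image (fun x _ y _ h => two_pow_injective h)]
    -- compare the two divisors
    have hd1 : (∏ c ∈ U', Nat.fermatNumber c) ∈ n.divisors := by
      rw [hD]; exact Finset.mem_image_of_mem _ (Finset.mem_powerset.mpr hU')
    have hd2 : (∏ c ∈ U, Nat.fermatNumber c) ∈ n.divisors := by
      rw [hD]; exact Finset.mem_image_of_mem _ (Finset.mem_powerset.mpr hU)
    have hφeq : Nat.totient (∏ c ∈ U', Nat.fermatNumber c)
        = Nat.totient (∏ c ∈ U, Nat.fermatNumber c) := by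
      rw [totient_fermat_prod hpC hU', totient_fermat_prod hpC hU, hsU', hUs]
    have hPeq := φinj hd1 hd2 hφeq
    have hUeq : U' = U := fermat_prod_injOn hpC (Finset.mem_powerset.mpr hU')
      (Finset.mem_powerset.mpr hU) hPeq
    rw [← hU'V, hUeq]
  -- apply the core lemma to E
  have hE : E = (range E.card).image (2 ^ ·) := core_lemma E HE
  have hEcard : E.card = C.card := Finset.card_image_of_injOn
    (fun x _ y _ h => two_pow_injective h)
  set t := C.card with htdef
  have hCr : C = range t := by
    apply Finset.image_injective two_pow_injective
    rw [← hEdef, hE, hEcard]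
  refine ⟨t, ?_, ?_⟩
  · by_contra hcon
    push_neg at hcon
    have h5 : (5 : ℕ) ∈ C := by
      rw [hCr, mem_range]; omega
    have := hpC 5 h5
    have h55 : Nat.fermatNumber 5 = 4294967297 := by norm_num [Nat.fermatNumber]
    rw [h55] at this
    have : ¬ (4294967297 : ℕ).Prime := by norm_num
    exact this (h55 ▸ hpC 5 h5)
  · rw [hCn, hCr, Nat.prod_fermatNumber, Nat.fermatNumber]
    omega


/-- A natural number is `ℚ`-optimal iff it equals `2^(2^i) - 1` for some `0 ≤ i ≤ 5`.
In particular there are exactly six `ℚ`-optimal numbers, the largest being `2^(2^5)-1`. -/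
theorem QOptimal_iff (n : ℕ) :
    QOptimal n ↔ ∃ i : ℕ, i ≤ 5 ∧ n = 2 ^ (2 ^ i) - 1 := by
  constructor
  · rintro ⟨hn, H⟩
    obtain ⟨t, ht, hteq⟩ := fermat_of_qoptimal hn
      (fun m hm => (poly_bridge hn m).mp (H m hm))
    exact ⟨t, ht, hteq⟩
  · rintro ⟨i, hi, rfl⟩
    have hp : ∀ c < i, (Nat.fermatNumber c).Prime := by
      intro c hc
      have hc4 : c ≤ 4 := by omega
      interval_cases c <;> norm_num [Nat.fermatNumber]
    have h2 : (2:ℕ) ≤ 2 ^ 2 ^ i := by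
      calc (2:ℕ) = 2 ^ 1 := rfl
        _ ≤ 2 ^ 2 ^ i := Nat.pow_le_pow_right (by norm_num) Nat.one_le_two_pow
    have hn : 1 ≤ 2 ^ 2 ^ i - 1 := by omega
    refine ⟨hn, fun m hm => ?_⟩
    rw [poly_bridge hn m]
    exact exu_totient_of_fermat i hp hm
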